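/- Let ω be a nonzero real number, let C₁, …, C₉ be real parameters with C₂² + C₃² + C₅² + C₆² + C₇² + C₈² ≠ 0, and let q, p, A₊, A₋ : ℝ → ℝ be differentiable functions satisfying at every time: A₊² + A₋² = 2·√(p² + ω²q²), A₊² − A₋² = 2p, A₊·A₋ = ω·q, and p² + ω²q² > 0. Define the anti-commutative structure constants μ^i_{jk} by: μ^i_{jk} = −μ^i_{kj}, μ¹₂₃ = C₂·p − C₃·ω·q − C₄, μ²₁₃ = C₂·p − C₃·ω·q + C₄, μ¹₃₁ = C₂·ω·q + C₃·p − C₁, μ²₂₃ = C₂·ω·q + C₃·p + C₁, μ¹₁₂ = C₅·A₊ + C₆·A₋, μ²₁₂ = C₅·A₋ − C₆·A₊, μ³₁₃ = C₇·A₊ + C₈·A₋, μ³₂₃ = C₇·A₋ − C₈·A₊, μ³₁₂ = C₉, and all remaining components zero. Then μ satisfies the operadic Lax equation d/dt μ^i_{jk} = Σ_{s=1}^{3} (M^i_s·μ^s_{jk} − M^s_j·μ^i_{sk} − M^s_k·μ^i_{js}) for all i, j, k at every time, with M = (ω/2)·[[0, −1, 0], [1, 0, 0], [0, 0, 0]],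 if and only if q′ = p and p′ = −ω²·q hold at every time. In other words, (μ, M) is a 3-dimensional anti-commutative binary operadic Lax pair for the harmonic oscillator. -/

import Mathlib

/-- The constant matrix `M = (ω/2)·[[0,−1,0],[1,0,0],[0,0,0]]`. -/
noncomputable def M3 (ω : ℝ) : Matrix (Fin 3) (Fin 3) ℝ :=
  (ω / 2) • !![0, -1, 0; 1, 0, 0; 0, 0, 0]

/-- The operadic Lax equation for time-dependent structure constants `μ^i_{jk}`:
`d/dt μ^i_{jk} = Σ_s (M^i_s·μ^s_{jk} − M^s_j·μ^i_{sk} − M^s_k·μ^i_{js})`. -/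
def OperadicLax (ω : ℝ) (μ : Fin 3 → Fin 3 → Fin 3 → ℝ → ℝ) : Prop :=
  ∀ (i j k : Fin 3) (t : ℝ),
    deriv (μ i j k) t =
      ∑ s : Fin 3,
        (M3 ω i s * μ s j k t - M3 ω s j * μ i s k t - M3 ω s k * μ i j s t)

/-- The time-dependent anti-commutative structure constants `μ^i_{jk}`
(indices `1,2,3` correspond to `0,1,2`): `μ¹₂₃ = C₂p − C₃ωq − C₄`,
`μ²₁₃ = C₂p − C₃ωq + C₄`, `μ¹₃₁ = C₂ωq + C₃p − C₁`, `μ²₂₃ = C₂ωq + C₃p + C₁`,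
`μ¹₁₂ = C₅A₊ + C₆A₋`, `μ²₁₂ = C₅A₋ − C₆A₊`, `μ³₁₃ = C₇A₊ + C₈A₋`,
`μ³₂₃ = C₇A₋ − C₈A₊`, `μ³₁₂ = C₉`, with `μ^i_{jk} = −μ^i_{kj}` and all
remaining components zero. -/
noncomputable def μop (ω C₁ C₂ C₃ C₄ C₅ C₆ C₇ C₈ C₉ : ℝ) (q p Ap Am : ℝ → ℝ) :
    Fin 3 → Fin 3 → Fin 3 → ℝ → ℝ :=
  ![![![fun _ => 0,
        fun t => C₅ * Ap t + C₆ * Am t,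
        fun t => -(C₂ * ω * q t + C₃ * p t - C₁)],
      ![fun t => -(C₅ * Ap t + C₆ * Am t),
        fun _ => 0,
        fun t => C₂ * p t - C₃ * ω * q t - C₄],
      ![fun t => C₂ * ω * q t + C₃ * p t - C₁,
        fun t => -(C₂ * p t - C₃ * ω * q t - C₄),
        fun _ => 0]],
    ![![fun _ => 0,
        fun t => C₅ * Am t - C₆ * Ap t,
        fun t => C₂ * p t - C₃ * ω * q t + C₄],
      ![fun t => -(C₅ * Am t - C₆ * Ap t),
        fun _ => 0,
        fun t => C₂ * ω * q t + C₃ * p t + C₁],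
      ![fun t => -(C₂ * p t - C₃ * ω * q t + C₄),
        fun t => -(C₂ * ω * q t + C₃ * p t + C₁),
        fun _ => 0]],
    ![![fun _ => 0,
        fun _ => C₉,
        fun t => C₇ * Ap t + C₈ * Am t],
      ![fun _ => -C₉,
        fun _ => 0,
        fun t => C₇ * Am t - C₈ * Ap t],
      ![fun t => -(C₇ * Ap t + C₈ * Am t),
        fun t => -(C₇ * Am t - C₈ * Ap t),
        fun _ => 0]]]


set_option maxHeartbeats 1600000 in
/-- Main Theorem: for `ω ≠ 0` and parameters with
`C₂² + C₃² + C₅² + C₆² + C₇² + C₈² ≠ 0`, the pair `(μ, M)` is a 3-dimensional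
anti-commutative binary operadic Lax pair for the harmonic oscillator: `μ`
satisfies the operadic Lax equation iff `q′ = p` and `p′ = −ω²q`. -/
theorem main_operadic_lax_pair (ω : ℝ) (hω : ω ≠ 0)
    (C₁ C₂ C₃ C₄ C₅ C₆ C₇ C₈ C₉ : ℝ)
    (hC : C₂ ^ 2 + C₃ ^ 2 + C₅ ^ 2 + C₆ ^ 2 + C₇ ^ 2 + C₈ ^ 2 ≠ 0)
    (q p Ap Am : ℝ → ℝ)
    (hq : Differentiable ℝ q) (hp : Differentiable ℝ p)
    (hAp : Differentiable ℝ Ap) (hAm : Differentiable ℝ Am)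
    (h1 : ∀ t : ℝ, Ap t ^ 2 + Am t ^ 2 = 2 * Real.sqrt (p t ^ 2 + ω ^ 2 * q t ^ 2))
    (h2 : ∀ t : ℝ, Ap t ^ 2 - Am t ^ 2 = 2 * p t)
    (h3 : ∀ t : ℝ, Ap t * Am t = ω * q t)
    (hpos : ∀ t : ℝ, 0 < p t ^ 2 + ω ^ 2 * q t ^ 2) :
    OperadicLax ω (μop ω C₁ C₂ C₃ C₄ C₅ C₆ C₇ C₈ C₉ q p Ap Am) ↔
      (∀ t : ℝ, deriv q t = p t ∧ deriv p t = -(ω ^ 2) * q t) := by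
  -- positivity of Ap^2 + Am^2
  have hAA : ∀ t : ℝ, 0 < Ap t ^ 2 + Am t ^ 2 := by
    intro t
    rw [h1 t]
    have := Real.sqrt_pos.mpr (hpos t)
    linarith
  -- derivative identities from h2, h3
  have Hd2 : ∀ t : ℝ, Ap t * deriv Ap t - Am t * deriv Am t = deriv p t := by
    intro t
    have hL : deriv (fun s => Ap s ^ 2 - Am s ^ 2) t
        = 2 * Ap t ^ 1 * deriv Ap t - 2 * Am t ^ 1 * deriv Am t := by
      have := (((hAp t).hasDerivAt.pow 2).sub ((hAm t).hasDerivAt.pow 2)).deriv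
      refine this.trans ?_
      norm_num
    have hfun : (fun s => Ap s ^ 2 - Am s ^ 2) = fun s => 2 * p s := funext h2
    rw [hfun] at hL
    have hR : deriv (fun s => 2 * p s) t = 2 * deriv p t :=
      ((hp t).hasDerivAt.const_mul 2).deriv
    rw [hR] at hL
    nlinarith [hL]
  have Hd3 : ∀ t : ℝ, deriv Ap t * Am t + Ap t * deriv Am t = ω * deriv q t := by
    intro t
    have hL : deriv (fun s => Ap s * Am s) t
        = deriv Ap t * Am t + Ap t * deriv Am t :=
      ((hAp t).hasDerivAt.mul (hAm t).hasDerivAt).deriv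
    have hfun : (fun s => Ap s * Am s) = fun s => ω * q s := funext h3
    rw [hfun] at hL
    have hR : deriv (fun s => ω * q s) t = ω * deriv q t :=
      ((hq t).hasDerivAt.const_mul ω).deriv
    rw [hR] at hL
    linarith [hL]
  -- derivative formulas for the nontrivial components
  have D1 : ∀ t : ℝ, deriv (fun s => C₅ * Ap s + C₆ * Am s) t
      = C₅ * deriv Ap t + C₆ * deriv Am t := fun t =>
    (((hAp t).hasDerivAt.const_mul C₅).add ((hAm t).hasDerivAt.const_mul C₆)).deriv
  have D2 : ∀ t : ℝ, deriv (fun s => C₂ * ω * q s + C₃ * p s - C₁) t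
      = C₂ * ω * deriv q t + C₃ * deriv p t := fun t =>
    ((((hq t).hasDerivAt.const_mul (C₂ * ω)).add
      ((hp t).hasDerivAt.const_mul C₃)).sub_const C₁).deriv
  have D3 : ∀ t : ℝ, deriv (fun s => C₂ * p s - C₃ * ω * q s - C₄) t
      = C₂ * deriv p t - C₃ * ω * deriv q t := fun t =>
    ((((hp t).hasDerivAt.const_mul C₂).sub
      ((hq t).hasDerivAt.const_mul (C₃ * ω))).sub_const C₄).deriv
  have D4 : ∀ t : ℝ, deriv (fun s => C₅ * Am s - C₆ * Ap s) t
      = C₅ * deriv Am t - C₆ * deriv Ap t := fun t =>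
    (((hAm t).hasDerivAt.const_mul C₅).sub ((hAp t).hasDerivAt.const_mul C₆)).deriv
  have D5 : ∀ t : ℝ, deriv (fun s => C₂ * p s - C₃ * ω * q s + C₄) t
      = C₂ * deriv p t - C₃ * ω * deriv q t := fun t =>
    ((((hp t).hasDerivAt.const_mul C₂).sub
      ((hq t).hasDerivAt.const_mul (C₃ * ω))).add_const C₄).deriv
  have D6 : ∀ t : ℝ, deriv (fun s => C₂ * ω * q s + C₃ * p s + C₁) t
      = C₂ * ω * deriv q t + C₃ * deriv p t := fun t =>
    ((((hq t).hasDerivAt.const_mul (C₂ * ω)).add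
      ((hp t).hasDerivAt.const_mul C₃)).add_const C₁).deriv
  have D7 : ∀ t : ℝ, deriv (fun s => C₇ * Ap s + C₈ * Am s) t
      = C₇ * deriv Ap t + C₈ * deriv Am t := fun t =>
    (((hAp t).hasDerivAt.const_mul C₇).add ((hAm t).hasDerivAt.const_mul C₈)).deriv
  have D8 : ∀ t : ℝ, deriv (fun s => C₇ * Am s - C₈ * Ap s) t
      = C₇ * deriv Am t - C₈ * deriv Ap t := fun t =>
    (((hAm t).hasDerivAt.const_mul C₇).sub ((hAp t).hasDerivAt.const_mul C₈)).deriv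
  constructor
  · -- forward direction
    intro hL t
    have e1 := hL 0 1 2 t
    have e2 := hL 0 2 0 t
    have e3 := hL 0 0 1 t
    have e4 := hL 1 0 1 t
    have e5 := hL 2 0 2 t
    have e6 := hL 2 1 2 t
    simp only [μop, M3, Fin.sum_univ_three, Matrix.smul_apply, smul_eq_mul,
      Matrix.cons_val', Matrix.cons_val_zero, Matrix.cons_val_one, Matrix.head_cons,
      Matrix.empty_val', Matrix.cons_val_fin_one, Matrix.head_fin_const,
      Matrix.cons_val_two, Matrix.tail_cons, Matrix.of_apply, deriv.neg,
      D1, D2, D3, D4, D5, D6, D7, D8] at e1 e2 e3 e4 e5 e6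
    by_cases h23 : C₂ ^ 2 + C₃ ^ 2 ≠ 0
    · have hb : (C₂ ^ 2 + C₃ ^ 2) * (deriv p t + ω ^ 2 * q t) = 0 := by
        linear_combination C₂ * e1 + C₃ * e2
      have ha : (C₂ ^ 2 + C₃ ^ 2) * (ω * (deriv q t - p t)) = 0 := by
        linear_combination C₂ * e2 - C₃ * e1
      have hb' := mul_eq_zero.mp hb
      have ha' := mul_eq_zero.mp ha
      rcases hb' with hb' | hb'
      · exact absurd hb' h23
      rcases ha' with ha' | ha'
      · exact absurd ha' h23
      rcases mul_eq_zero.mp ha' with h | h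
      · exact absurd h hω
      constructor
      · linarith
      · linarith
    · push_neg at h23
      -- get Ap' and Am' from one of the other two pairs
      have key : deriv Ap t = -(ω / 2) * Am t ∧ deriv Am t = ω / 2 * Ap t := by
        by_cases h56 : C₅ ^ 2 + C₆ ^ 2 ≠ 0
        · have hu : (C₅ ^ 2 + C₆ ^ 2) * (deriv Ap t + ω / 2 * Am t) = 0 := by
            linear_combination C₅ * e3 - C₆ * e4
          have hv : (C₅ ^ 2 + C₆ ^ 2) * (deriv Am t - ω / 2 * Ap t) = 0 := by
            linear_combination C₅ * e4 + C₆ * e3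
          rcases mul_eq_zero.mp hu with h | h
          · exact absurd h h56
          rcases mul_eq_zero.mp hv with h' | h'
          · exact absurd h' h56
          constructor <;> linarith
        · push_neg at h56
          have h78 : C₇ ^ 2 + C₈ ^ 2 ≠ 0 := by
            intro h78
            apply hC
            linarith
          have hu : (C₇ ^ 2 + C₈ ^ 2) * (deriv Ap t + ω / 2 * Am t) = 0 := by
            linear_combination C₇ * e5 - C₈ * e6
          have hv : (C₇ ^ 2 + C₈ ^ 2) * (deriv Am t - ω / 2 * Ap t) = 0 := by
            linear_combination C₇ * e6 + C₈ * e5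
          rcases mul_eq_zero.mp hu with h | h
          · exact absurd h h78
          rcases mul_eq_zero.mp hv with h' | h'
          · exact absurd h' h78
          constructor <;> linarith
      obtain ⟨kAp, kAm⟩ := key
      have hp' : deriv p t = -(ω ^ 2) * q t := by
        have := Hd2 t
        rw [kAp, kAm] at this
        have h3t := h3 t
        linear_combination (-1 : ℝ) * this - ω * h3t
      have hq' : deriv q t = p t := by
        have := Hd3 t
        rw [kAp, kAm] at this
        have h2t := h2 t
        have : ω * deriv q t = ω * p t := by
          linear_combination (-1 : ℝ) * this + ω / 2 * h2t
        exact mul_left_cancel₀ hω this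
      exact ⟨hq', hp'⟩
  · -- backward direction
    intro hODE
    have hq' : ∀ t : ℝ, deriv q t = p t := fun t => (hODE t).1
    have hp' : ∀ t : ℝ, deriv p t = -(ω ^ 2) * q t := fun t => (hODE t).2
    have kAp : ∀ t : ℝ, deriv Ap t = -(ω / 2) * Am t := by
      intro t
      have hd2 := Hd2 t
      have hd3 := Hd3 t
      rw [hq' t] at hd3
      rw [hp' t] at hd2
      have h2t := h2 t
      have h3t := h3 t
      have hz : (Ap t ^ 2 + Am t ^ 2) * (deriv Ap t + ω / 2 * Am t) = 0 := by
        linear_combination Ap t * hd2 + Am t * hd3 + ω * Ap t * h3t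
          - ω / 2 * Am t * h2t
      rcases mul_eq_zero.mp hz with h | h
      · exact absurd h (ne_of_gt (hAA t))
      · linarith
    have kAm : ∀ t : ℝ, deriv Am t = ω / 2 * Ap t := by
      intro t
      have hd2 := Hd2 t
      have hd3 := Hd3 t
      rw [hq' t] at hd3
      rw [hp' t] at hd2
      have h2t := h2 t
      have h3t := h3 t
      have hz : (Ap t ^ 2 + Am t ^ 2) * (deriv Am t - ω / 2 * Ap t) = 0 := by
        linear_combination Ap t * hd3 - Am t * hd2 - ω * Am t * h3t
          - ω / 2 * Ap t * h2t
      rcases mul_eq_zero.mp hz with h | h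
      · exact absurd h (ne_of_gt (hAA t))
      · linarith
    have hfin : ∀ i : Fin 3, i = 0 ∨ i = 1 ∨ i = 2 := by decide
    intro i j k t
    rcases hfin i with rfl | rfl | rfl <;> rcases hfin j with rfl | rfl | rfl <;>
      rcases hfin k with rfl | rfl | rfl <;>
      simp only [μop, M3, Fin.sum_univ_three, Matrix.smul_apply, smul_eq_mul,
        Matrix.cons_val', Matrix.cons_val_zero, Matrix.cons_val_one, Matrix.head_cons,
        Matrix.empty_val', Matrix.cons_val_fin_one, Matrix.head_fin_const,
        Matrix.cons_val_two, Matrix.tail_cons, Matrix.of_apply, deriv.neg, deriv.fun_neg,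
        deriv_const', deriv_const,
        D1, D2, D3, D4, D5, D6, D7, D8, hq', hp', kAp, kAm] <;>
      ring
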